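/- Every cm-monoid is either of type 1 or of type 2; that is, either a[k] = 1 for every element a and every k ∈ ω, or 1[k] ≠ 1[j] for all k ≠ j. -/
import Mathlib


universe u

open scoped Classical

/-- A finite permutation of ω: an element of S_ω, i.e. a permutation moving
only finitely many points. -/
def FinPerm (σ : Equiv.Perm ℕ) : Prop := {n : ℕ | σ n ≠ n}.Finite

/-- The raw operations of a merge algebra: the binary merges `⋆_n` and the
actions `σ̄` of (finite) permutations. -/
structure MergeOps (A : Type u) where
  star : ℕ → A → A → A
  bar : Equiv.Perm ℕ → A → A

namespace MergeOps

variable {A : Type u}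

/-- `chain g k = ((g 0 ⋆_1 g 1) ⋆_2 g 2) … ⋆_k (g k)`. -/
def chain (M : MergeOps A) (g : ℕ → A) : ℕ → A
  | 0 => g 0
  | i + 1 => M.star (i + 1) (M.chain g i) (g (i + 1))

/-- `chainStar g k y = ((…(g 0 ⋆_1 g 1) ⋆_2 …) ⋆_{k-1} g (k-1)) ⋆_k y`. -/
def chainStar (M : MergeOps A) (g : ℕ → A) (k : ℕ) (y : A) : A :=
  match k with
  | 0 => y
  | k + 1 => M.star (k + 1) (M.chain g k) y

/-- The `n`-coordinate of `x` relative to the coordinator `pt`: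
`x[n] = τ̄^n_0(x) ⋆_1 pt`. -/
def coord (M : MergeOps A) (pt x : A) (n : ℕ) : A :=
  M.star 1 (M.bar (Equiv.swap 0 n) x) pt

end MergeOps

/-- A merge algebra: operations `⋆_n` and `σ̄` satisfying axioms (B1)–(B7). -/
structure MergeAlgebra (A : Type u) extends MergeOps A where
  /-- (B1) each `⋆_n` is associative -/
  star_assoc : ∀ (n : ℕ) (x y z : A), star n (star n x y) z = star n x (star n y z)
  /-- (B1) each `⋆_n` is idempotent -/
  star_idem : ∀ (n : ℕ) (x : A), star n x x = x
  /-- (B2) -/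
  star_zero : ∀ x y : A, star 0 x y = y
  /-- (B3), first part (k ≥ n) -/
  B3a : ∀ {n k : ℕ}, n ≤ k → ∀ x y z : A, star n (star k x y) z = star n x z
  /-- (B3), second part (k ≥ n) -/
  B3b : ∀ {n k : ℕ}, n ≤ k → ∀ x y z : A, star k x (star n y z) = star k x z
  /-- (B4) (k < n) -/
  B4 : ∀ {n k : ℕ}, k < n → ∀ x y z : A, star n (star k x y) z = star k x (star n y z)
  /-- (B5) `σ̄(τ̄(x)) = (τ∘σ)‾(x)` -/
  B5 : ∀ σ τ : Equiv.Perm ℕ, FinPerm σ → FinPerm τ → ∀ x : A,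
      bar σ (bar τ x) = bar (τ * σ) x
  /-- (B5) `ῑ(x) = x` -/
  bar_id : ∀ x : A, bar 1 x = x
  /-- (B6): for `n ≤ k` and `σ` a permutation of `k`, with `f i = x` iff `σ i < n`:
  `σ̄(x ⋆_n y) = ((…(σ̄(f 0) ⋆_1 σ̄(f 1)) ⋆_2 …) ⋆_{k-1} σ̄(f (k-1))) ⋆_k y`. -/
  B6 : ∀ {n k : ℕ}, n ≤ k → ∀ σ : Equiv.Perm ℕ, (∀ i, k ≤ i → σ i = i) →
      ∀ x y : A, bar σ (star n x y) =
        toMergeOps.chainStar (fun i => bar σ (if σ i < n then x else y)) k y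
  /-- (B7) -/
  B7 : ∀ {m n : ℕ} (σ τ : Equiv.Perm ℕ), FinPerm σ → FinPerm τ →
      (∀ i, m ≤ i → i < n → σ i = τ i) →
      ∀ x y z : A, star n (star m z (bar σ x)) y = star n (star m z (bar τ x)) y

/-- An m-monoid: a monoid structure together with a merge algebra structure on
the same carrier, satisfying right distributivity (L1). -/
structure MMonoid (A : Type u) extends MergeAlgebra A where
  mul : A → A → A
  one : A
  mul_assoc : ∀ x y z : A, mul (mul x y) z = mul x (mul y z)
  one_mul : ∀ x : A, mul one x = x
  mul_one : ∀ x : A, mul x one = x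
  /-- (L1) right distributivity -/
  L1 : ∀ (n : ℕ) (x y z : A), mul (star n x y) z = star n (mul x z) (mul y z)

namespace MMonoid

variable {A : Type u} (M : MMonoid A)

/-- A cm-monoid is an m-monoid satisfying (L2): `σ̄(x)·y = σ̄(x·y)`. -/
def IsCM : Prop :=
  ∀ σ : Equiv.Perm ℕ, FinPerm σ → ∀ x y : A, M.mul (M.bar σ x) y = M.bar σ (M.mul x y)

/-- An am-monoid is an m-monoid satisfying (L3): `σ̄(x·y) = σ̄(x)·σ̄(y)`. -/
def IsAM : Prop :=
  ∀ σ : Equiv.Perm ℕ, FinPerm σ → ∀ x y : A, M.bar σ (M.mul x y) = M.mul (M.bar σ x) (M.bar σ y)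

/-- The `n`-coordinate `x[n] = τ̄^n_0(x) ⋆_1 1` (the coordinator is the unit). -/
def coord (x : A) (n : ℕ) : A := M.toMergeOps.coord M.one x n

/-- Extensionality: elements with the same coordinates are equal. -/
def Extensional : Prop := ∀ x y : A, (∀ n : ℕ, M.coord x n = M.coord y n) → x = y

/-- An element has rank ≤ n iff `x ⋆_n 1 = x`; the m-monoid is finitely ranked
if every element has finite rank. -/
def FinitelyRanked : Prop := ∀ x : A, ∃ n : ℕ, M.star n x M.one = x

/-- A degenerate m-monoid. -/
def Degenerate : Prop :=
  (∀ σ : Equiv.Perm ℕ, FinPerm σ → ∀ x : A, M.bar σ x = x) ∧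
    (∀ (n : ℕ) (x y : A), M.star n x y = y)

/-- `a` is finite dimensional: for every `n` there is `m` with
`(a·(1 ⋆_m b ⋆_{m+k} 1)) ⋆_n a = a` for all `b` and `k`. -/
def FinDimEl (a : A) : Prop :=
  ∀ n : ℕ, ∃ m : ℕ, ∀ (b : A) (k : ℕ),
    M.star n (M.mul a (M.star (m + k) (M.star m M.one b) M.one)) a = a

/-- `a` is ω-finite dimensional: for every `n` there is `m` with
`(a·(1 ⋆_m b)) ⋆_n a = a` for all `b`. -/
def OmegaFinDimEl (a : A) : Prop :=
  ∀ n : ℕ, ∃ m : ℕ, ∀ b : A,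
    M.star n (M.mul a (M.star m M.one b)) a = a

/-- An m-monoid is finite dimensional if every element is. -/
def FinDim : Prop := ∀ a : A, M.FinDimEl a

/-- An m-monoid is ω-finite dimensional if every element is. -/
def OmegaFinDim : Prop := ∀ a : A, M.OmegaFinDimEl a

end MMonoid


lemma finperm_swap (a b : ℕ) : FinPerm (Equiv.swap a b) := by
  apply Set.Finite.subset ((Set.finite_singleton b).insert a)
  intro n hn
  simp only [Set.mem_setOf_eq] at hn
  by_contra h
  simp only [Set.mem_insert_iff, Set.mem_singleton_iff] at h
  push_neg at h
  exact hn (Equiv.swap_apply_of_ne_of_ne h.1 h.2)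

lemma finperm_mul {σ τ : Equiv.Perm ℕ} (hσ : FinPerm σ) (hτ : FinPerm τ) :
    FinPerm (σ * τ) := by
  apply Set.Finite.subset (hσ.union hτ)
  intro n hn
  by_contra hc
  simp only [Set.mem_union, Set.mem_setOf_eq] at hc
  push_neg at hc
  apply hn
  show σ (τ n) = n
  rw [hc.2, hc.1]

lemma chainStar_two {A : Type u} (M : MergeOps A) (g : ℕ → A) (y : A) :
    M.chainStar g 2 y = M.star 2 (M.star 1 (g 0) (g 1)) y := rfl

/-- STATEMENT 8: every cm-monoid is either of type 1 (`a[k] = 1` for every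
element `a` and every `k`) or of type 2 (`1[k] ≠ 1[j]` for all `k ≠ j`). -/
theorem cm_type1_or_type2 {A : Type u} (M : MMonoid A) (hcm : M.IsCM) :
    (∀ (a : A) (k : ℕ), M.coord a k = M.one) ∨
      (∀ k j : ℕ, k ≠ j → M.coord M.one k ≠ M.coord M.one j) := by
  classical
  by_cases h2 : ∀ k j : ℕ, k ≠ j → M.coord M.one k ≠ M.coord M.one j
  · exact Or.inr h2
  left
  push_neg at h2
  obtain ⟨k, j, hkj, hcc⟩ := h2
  have hcoord : ∀ (x : A) (n : ℕ),
      M.coord x n = M.star 1 (M.bar (Equiv.swap 0 n) x) M.one := fun _ _ => rfl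
  have hfs : ∀ a b : ℕ, FinPerm (Equiv.swap a b) := finperm_swap
  -- coordinate only depends on ρ 0
  have hC : ∀ (ρ ρ' : Equiv.Perm ℕ), FinPerm ρ → FinPerm ρ' → ρ 0 = ρ' 0 →
      ∀ a : A, M.star 1 (M.bar ρ a) M.one = M.star 1 (M.bar ρ' a) M.one := by
    intro ρ ρ' hρ hρ' h0 a
    have h7 := M.B7 (m := 0) (n := 1) ρ ρ' hρ hρ'
      (fun i _ hi => by rw [Nat.lt_one_iff.mp hi]; exact h0) a M.one M.one
    simpa [M.star_zero] using h7
  -- a[n] = (1[n] · a)[0]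
  have hB : ∀ (n : ℕ) (a : A),
      M.coord a n = M.star 1 (M.mul (M.coord M.one n) a) M.one := by
    intro n a
    have h1 : M.mul (M.coord M.one n) a
        = M.star 1 (M.bar (Equiv.swap 0 n) a) a := by
      rw [hcoord, M.L1, M.one_mul, hcm _ (hfs 0 n), M.one_mul]
    rw [h1, M.B3a le_rfl, hcoord]
  have hkj2 : ∀ a : A, M.coord a k = M.coord a j := fun a => by
    rw [hB k a, hB j a, hcc]
  -- all coordinates agree
  have hD : ∀ (a : A) (m n : ℕ), M.coord a m = M.coord a n := by
    intro a m n
    rcases eq_or_ne m n with rfl | hmn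
    · rfl
    have hj'm : Equiv.swap k m j ≠ m := by
      intro h
      exact hkj ((Equiv.swap k m).injective
        (h.trans (Equiv.swap_apply_left k m).symm)).symm
    have hπfin : FinPerm (Equiv.swap (Equiv.swap k m j) n * Equiv.swap k m) :=
      finperm_mul (hfs _ _) (hfs _ _)
    set π := Equiv.swap (Equiv.swap k m j) n * Equiv.swap k m with hπdef
    have hπk : π k = m := by
      show Equiv.swap (Equiv.swap k m j) n (Equiv.swap k m k) = m
      rw [Equiv.swap_apply_left]
      exact Equiv.swap_apply_of_ne_of_ne (Ne.symm hj'm) hmn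
    have hπj : π j = n := by
      show Equiv.swap (Equiv.swap k m j) n (Equiv.swap k m j) = n
      exact Equiv.swap_apply_left _ _
    have key : ∀ (p q : ℕ), π p = q → ∀ b : A,
        M.coord (M.bar π b) p = M.coord b q := by
      intro p q hq b
      rw [hcoord, M.B5 _ π (hfs 0 p) hπfin, hcoord]
      exact hC _ _ (finperm_mul hπfin (hfs 0 p)) (hfs 0 q)
        (by simp [Equiv.Perm.mul_apply, Equiv.swap_apply_left, hq]) b
    have h := hkj2 (M.bar π a)
    rw [key k m hπk, key j n hπj] at h
    exact h
  -- (x ⋆₁ 1)[1] = 1[1]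
  have hE : ∀ x : A, M.coord (M.star 1 x M.one) 1 = M.coord M.one 1 := by
    intro x
    have h6 := M.B6 (n := 1) (k := 2) (by norm_num) (Equiv.swap 0 1)
      (fun i hi => Equiv.swap_apply_of_ne_of_ne (by omega) (by omega)) x M.one
    rw [hcoord, h6, chainStar_two]
    have hg0 : (Equiv.swap 0 1 : Equiv.Perm ℕ) 0 = 1 := Equiv.swap_apply_left 0 1
    have hg1 : (Equiv.swap 0 1 : Equiv.Perm ℕ) 1 = 0 := Equiv.swap_apply_right 0 1
    simp only [hg0, hg1, Nat.lt_irrefl, if_false, Nat.zero_lt_one, if_true]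
    rw [M.B3a one_le_two, M.B3a le_rfl, hcoord]
  have h00 : ∀ a : A, M.coord a 0 = M.star 1 a M.one := by
    intro a
    rw [hcoord, Equiv.swap_self, show (Equiv.refl ℕ : Equiv.Perm ℕ) = 1 from rfl,
      M.bar_id]
  have hone : M.coord M.one 0 = M.one := by rw [h00, M.star_idem]
  have hc1 : ∀ a : A, M.coord a 0 = M.coord M.one 1 := by
    intro a
    have h2 : M.coord (M.star 1 a M.one) 0 = M.coord a 0 := by
      rw [h00, h00, M.B3a le_rfl]
    calc M.coord a 0 = M.coord (M.star 1 a M.one) 0 := h2.symm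
      _ = M.coord (M.star 1 a M.one) 1 := hD _ 0 1
      _ = M.coord M.one 1 := hE a
  have hc1one : M.coord M.one 1 = M.one := by rw [← hc1 M.one, hone]
  intro a n
  rw [hD a n 0, hc1 a, hc1one]
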